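/- Let f : ℝⁿ → ℝ be C¹ with f ≥ 1 and |∇f(x)| ≤ C f(x)^s for all x, where s < 4/3. Then the metric g_x = f(x)^s |dx|² is slowly varying: there exist constants r > 0 and C* > 0 such that for all x, y ∈ ℝⁿ, if |x - y| ≤ r f(x)^(-s/2) then C*⁻¹ ≤ f(x)^(s/2)/f(y)^(s/2) ≤ C*. -/

import Mathlib

open Real Set

/-- Key MVT estimate: `f ^ (1-t)` is Lipschitz with constant `|1-t| * C`. -/
lemma key_lip {n : ℕ} (f : EuclideanSpace ℝ (Fin n) → ℝ) (C t : ℝ)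
    (hf : ContDiff ℝ 1 f) (hf1 : ∀ x, 1 ≤ f x)
    (hgrad : ∀ x, ‖gradient f x‖ ≤ C * f x ^ t)
    (x y : EuclideanSpace ℝ (Fin n)) :
    |f y ^ (1 - t) - f x ^ (1 - t)| ≤ |1 - t| * C * ‖y - x‖ := by
  set γ : ℝ → EuclideanSpace ℝ (Fin n) := fun τ => x + τ • (y - x) with hγ
  have hfd : Differentiable ℝ f := hf.differentiable one_ne_zero
  have hγd : ∀ τ : ℝ, HasDerivAt γ (y - x) τ := by
    intro τ
    simpa [hγ] using ((hasDerivAt_id τ).smul_const (y - x)).const_add x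
  have hpos : ∀ τ : ℝ, 0 < f (γ τ) := fun τ => lt_of_lt_of_le one_pos (hf1 _)
  have hh : ∀ τ : ℝ, HasDerivAt (fun τ => f (γ τ)) (fderiv ℝ f (γ τ) (y - x)) τ := by
    intro τ
    exact (hfd _).hasFDerivAt.comp_hasDerivAt τ (hγd τ)
  have hg : ∀ τ : ℝ, HasDerivAt (fun τ => f (γ τ) ^ (1 - t))
      (fderiv ℝ f (γ τ) (y - x) * (1 - t) * f (γ τ) ^ ((1 - t) - 1)) τ := by
    intro τ
    exact (hh τ).rpow_const (Or.inl (ne_of_gt (hpos τ)))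
  have hbound : ∀ τ : ℝ,
      ‖fderiv ℝ f (γ τ) (y - x) * (1 - t) * f (γ τ) ^ ((1 - t) - 1)‖
        ≤ |1 - t| * C * ‖y - x‖ := by
    intro τ
    have h1 : ‖fderiv ℝ f (γ τ) (y - x)‖ ≤ C * f (γ τ) ^ t * ‖y - x‖ := by
      calc ‖fderiv ℝ f (γ τ) (y - x)‖ ≤ ‖fderiv ℝ f (γ τ)‖ * ‖y - x‖ :=
            (fderiv ℝ f (γ τ)).le_opNorm _
        _ ≤ C * f (γ τ) ^ t * ‖y - x‖ := by
            have : ‖fderiv ℝ f (γ τ)‖ = ‖gradient f (γ τ)‖ := by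
              simp [gradient]
            rw [this] at *
            exact mul_le_mul_of_nonneg_right (hgrad _) (norm_nonneg _)
    have h2 : f (γ τ) ^ ((1 - t) - 1) = (f (γ τ) ^ t)⁻¹ := by
      rw [show (1 - t) - 1 = -t by ring, Real.rpow_neg (le_of_lt (hpos τ))]
    have hft : 0 < f (γ τ) ^ t := Real.rpow_pos_of_pos (hpos τ) t
    rw [norm_mul, norm_mul, Real.norm_eq_abs, Real.norm_eq_abs, Real.norm_eq_abs, h2,
      abs_of_pos (inv_pos.mpr hft)]
    calc |fderiv ℝ f (γ τ) (y - x)| * |1 - t| * (f (γ τ) ^ t)⁻¹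
        ≤ (C * f (γ τ) ^ t * ‖y - x‖) * |1 - t| * (f (γ τ) ^ t)⁻¹ := by
          apply mul_le_mul_of_nonneg_right
          apply mul_le_mul_of_nonneg_right _ (abs_nonneg _)
          · exact h1
          · positivity
      _ = |1 - t| * C * ‖y - x‖ := by
          field_simp
  have key := norm_image_sub_le_of_norm_deriv_le_segment'
    (f := fun τ => f (γ τ) ^ (1 - t))
    (f' := fun τ => fderiv ℝ f (γ τ) (y - x) * (1 - t) * f (γ τ) ^ ((1 - t) - 1))
    (a := 0) (b := 1)
    (fun τ _ => (hg τ).hasDerivWithinAt) (fun τ _ => hbound τ) 1 (right_mem_Icc.2 zero_le_one)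
  have hγ1 : γ 1 = y := by simp [hγ]
  have hγ0 : γ 0 = x := by simp [hγ]
  simp only [hγ1, hγ0] at key
  simpa [Real.norm_eq_abs] using key

/-- Bound on `p ^ e` for `p` in `[K⁻¹, K]`. -/
lemma rpow_bounds {K p e : ℝ} (hK : 1 ≤ K) (hp : 0 < p) (h1 : K⁻¹ ≤ p) (h2 : p ≤ K) :
    (K ^ |e|)⁻¹ ≤ p ^ e ∧ p ^ e ≤ K ^ |e| := by
  have hK0 : 0 < K := lt_of_lt_of_le one_pos hK
  rcases le_or_gt 0 e with he | he
  · rw [abs_of_nonneg he]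
    constructor
    · rw [← Real.inv_rpow (le_of_lt hK0)]
      exact Real.rpow_le_rpow (by positivity) h1 he
    · exact Real.rpow_le_rpow (le_of_lt hp) h2 he
  · rw [abs_of_neg he]
    constructor
    · have : K ^ e ≤ p ^ e := Real.rpow_le_rpow_of_nonpos hp h2 (le_of_lt he)
      calc (K ^ (-e))⁻¹ = K ^ e := by rw [← Real.rpow_neg (le_of_lt hK0), neg_neg]
        _ ≤ p ^ e := this
    · have : p ^ e ≤ (K⁻¹) ^ e :=
        Real.rpow_le_rpow_of_nonpos (by positivity) h1 (le_of_lt he)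
      calc p ^ e ≤ (K⁻¹) ^ e := this
        _ = K ^ (-e) := by
              rw [Real.inv_rpow (le_of_lt hK0), ← Real.rpow_neg (le_of_lt hK0)]

theorem metric_slowly_varying {n : ℕ}
    (f : EuclideanSpace ℝ (Fin n) → ℝ) (C s : ℝ)
    (hf : ContDiff ℝ 1 f) (hf1 : ∀ x, 1 ≤ f x) (hC : 0 < C) (hs : s < 4 / 3)
    (hgrad : ∀ x, ‖gradient f x‖ ≤ C * f x ^ s) :
    ∃ r > (0 : ℝ), ∃ Cstar > (0 : ℝ),
      ∀ x y : EuclideanSpace ℝ (Fin n), ‖x - y‖ ≤ r * f x ^ (-(s / 2)) →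
        Cstar⁻¹ ≤ f x ^ (s / 2) / f y ^ (s / 2) ∧
          f x ^ (s / 2) / f y ^ (s / 2) ≤ Cstar := by
  -- choose a modified exponent t ≠ 1
  set t : ℝ := if s = 1 then (5/4 : ℝ) else s with ht_def
  have hst : s ≤ t := by
    rw [ht_def]; split_ifs with h
    · rw [h]; norm_num
    · rfl
  have ht1 : t ≠ 1 := by
    rw [ht_def]; split_ifs with h
    · norm_num
    · exact h
  have hexp : -(s / 2) ≤ 1 - t := by
    rw [ht_def]; split_ifs with h
    · rw [h]; norm_num
    · linarith
  have hgrad' : ∀ x, ‖gradient f x‖ ≤ C * f x ^ t := by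
    intro x
    refine le_trans (hgrad x) ?_
    exact mul_le_mul_of_nonneg_left
      (Real.rpow_le_rpow_of_exponent_le (hf1 x) hst) (le_of_lt hC)
  set T : ℝ := |1 - t| with hT_def
  have hT : 0 < T := abs_pos.mpr (sub_ne_zero.mpr (Ne.symm ht1))
  set r : ℝ := 1 / (2 * (T + 1) * C) with hr_def
  have hr : 0 < r := by positivity
  set K : ℝ := (2 : ℝ) ^ (1 / T) with hK_def
  have hK1 : 1 ≤ K := Real.one_le_rpow (by norm_num) (by positivity)
  have hK0 : 0 < K := lt_of_lt_of_le one_pos hK1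
  refine ⟨r, hr, K ^ |s / 2|, Real.rpow_pos_of_pos hK0 _, ?_⟩
  intro x y hxy
  have ha1 : 1 ≤ f x := hf1 x
  have hb1 : 1 ≤ f y := hf1 y
  have ha0 : 0 < f x := lt_of_lt_of_le one_pos ha1
  have hb0 : 0 < f y := lt_of_lt_of_le one_pos hb1
  -- the MVT estimate
  have key := key_lip f C t hf hf1 hgrad' x y
  rw [norm_sub_rev] at key
  have hstep : |f y ^ (1 - t) - f x ^ (1 - t)| ≤ (1/2) * f x ^ (1 - t) := by
    have h1 : f x ^ (-(s / 2)) ≤ f x ^ (1 - t) :=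
      Real.rpow_le_rpow_of_exponent_le ha1 hexp
    have h2 : T * C * ‖x - y‖ ≤ T * C * (r * f x ^ (1 - t)) := by
      apply mul_le_mul_of_nonneg_left _ (by positivity)
      exact le_trans hxy (mul_le_mul_of_nonneg_left h1 (le_of_lt hr))
    have h3 : T * C * (r * f x ^ (1 - t)) ≤ (1/2) * f x ^ (1 - t) := by
      have : T * C * r ≤ 1/2 := by
        rw [hr_def, mul_one_div, div_le_div_iff₀ (by positivity) (by norm_num : (0:ℝ) < 2)]
        nlinarith
      have hfx : 0 < f x ^ (1 - t) := Real.rpow_pos_of_pos ha0 _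
      calc T * C * (r * f x ^ (1 - t)) = (T * C * r) * f x ^ (1 - t) := by ring
        _ ≤ (1/2) * f x ^ (1 - t) := mul_le_mul_of_nonneg_right this (le_of_lt hfx)
    exact le_trans key (le_trans h2 h3)
  have hfx : 0 < f x ^ (1 - t) := Real.rpow_pos_of_pos ha0 _
  have hub : f y ^ (1 - t) ≤ 2 * f x ^ (1 - t) := by
    have := abs_le.mp hstep
    linarith [this.2]
  have hlb : (1/2) * f x ^ (1 - t) ≤ f y ^ (1 - t) := by
    have := abs_le.mp hstep
    linarith [this.1]
  -- bounds on q = f y / f x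
  set q : ℝ := f y / f x with hq_def
  have hq0 : 0 < q := by positivity
  have hqpow : q ^ (1 - t) = f y ^ (1 - t) / f x ^ (1 - t) :=
    Real.div_rpow (le_of_lt hb0) (le_of_lt ha0) (1 - t)
  have hqu : q ^ (1 - t) ≤ 2 := by
    rw [hqpow, div_le_iff₀ hfx]; linarith
  have hql : (1:ℝ)/2 ≤ q ^ (1 - t) := by
    rw [hqpow, le_div_iff₀ hfx]; linarith
  have hq_id : (q ^ (1 - t)) ^ (1 / (1 - t)) = q := by
    rw [← Real.rpow_mul (le_of_lt hq0)]
    rw [mul_one_div, div_self (sub_ne_zero.mpr (Ne.symm ht1)), Real.rpow_one]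
  have hql' : (2:ℝ)⁻¹ ≤ q ^ (1 - t) := by rwa [one_div] at hql
  have hu_ne : (1:ℝ) - t ≠ 0 := sub_ne_zero.mpr (Ne.symm ht1)
  have hqK : K⁻¹ ≤ q ∧ q ≤ K := by
    rcases lt_or_gt_of_ne hu_ne with hu | hu
    · -- 1 - t < 0
      have hTu : T = -(1 - t) := by rw [hT_def]; exact abs_of_neg hu
      have h1u : 1 / (1 - t) = -(1 / T) := by
        rw [hTu, one_div, one_div, inv_neg, neg_neg]
      have h1neg : 1 / (1 - t) ≤ 0 := by
        rw [h1u]; exact neg_nonpos.mpr (by positivity)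
      constructor
      · have hl : (2:ℝ) ^ (1 / (1 - t)) ≤ (q ^ (1 - t)) ^ (1 / (1 - t)) :=
          Real.rpow_le_rpow_of_nonpos (by positivity) hqu h1neg
        rw [hq_id] at hl
        have hKeq : K⁻¹ = (2:ℝ) ^ (1 / (1 - t)) := by
          rw [hK_def, h1u, Real.rpow_neg (by norm_num)]
        rw [hKeq]; exact hl
      · have hup : (q ^ (1 - t)) ^ (1 / (1 - t)) ≤ ((2:ℝ)⁻¹) ^ (1 / (1 - t)) :=
          Real.rpow_le_rpow_of_nonpos (by norm_num) hql' h1neg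
        rw [hq_id] at hup
        have hKeq : ((2:ℝ)⁻¹) ^ (1 / (1 - t)) = K := by
          rw [h1u, Real.rpow_neg (by norm_num), Real.inv_rpow (by norm_num), inv_inv, hK_def]
        rw [← hKeq]; exact hup
    · -- 1 - t > 0
      have hTu : T = 1 - t := by rw [hT_def]; exact abs_of_pos hu
      have h1nn : (0:ℝ) ≤ 1 / (1 - t) := by positivity
      constructor
      · have hl : ((2:ℝ)⁻¹) ^ (1 / (1 - t)) ≤ (q ^ (1 - t)) ^ (1 / (1 - t)) :=
          Real.rpow_le_rpow (by norm_num) hql' h1nn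
        rw [hq_id] at hl
        have hKeq : K⁻¹ = ((2:ℝ)⁻¹) ^ (1 / (1 - t)) := by
          rw [hK_def, hTu, ← Real.inv_rpow (by norm_num)]
        rw [hKeq]; exact hl
      · have hup : (q ^ (1 - t)) ^ (1 / (1 - t)) ≤ (2:ℝ) ^ (1 / (1 - t)) :=
          Real.rpow_le_rpow (by positivity) hqu h1nn
        rw [hq_id] at hup
        have hKeq : (2:ℝ) ^ (1 / (1 - t)) = K := by rw [hK_def, hTu]
        rw [← hKeq]; exact hup
  -- bounds on p = f x / f y
  have hp1 : K⁻¹ ≤ f x / f y := by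
    have : f x / f y = q⁻¹ := by rw [hq_def]; field_simp
    rw [this]
    exact (inv_le_inv₀ hK0 hq0).mpr hqK.2
  have hp2 : f x / f y ≤ K := by
    have : f x / f y = q⁻¹ := by rw [hq_def]; field_simp
    rw [this]
    calc q⁻¹ ≤ (K⁻¹)⁻¹ := (inv_le_inv₀ hq0 (by positivity)).mpr hqK.1
      _ = K := inv_inv K
  have hpp : 0 < f x / f y := by positivity
  have hrb := rpow_bounds hK1 hpp hp1 hp2 (e := s / 2)
  have hdiv : (f x / f y) ^ (s / 2) = f x ^ (s / 2) / f y ^ (s / 2) :=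
    Real.div_rpow (le_of_lt ha0) (le_of_lt hb0) (s / 2)
  rw [hdiv] at hrb
  exact hrb
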